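/- Let τ ∈ X with ‖τ‖ = 1 and let h : 𝔻₁ → X be injective and convex in the direction τ, i.e. h(𝔻₁) + tτ ⊆ h(𝔻₁) for all t ≥ 0; set F_t := h⁻¹ ∘ (·+tτ) ∘ h : 𝔻₁ → 𝔻₁. Let Γ(h,·) and Γ(h+tτ,·) : 𝔻₁ → L(Y) be given with Γ(h,x) invertible, satisfying Γ(h+tτ, x) = exp(−tC) ∘ Γ(h,x) for a fixed C ∈ L(Y) and all t ≥ 0, x ∈ 𝔻₁, together with the norm bound ‖Γ(h, F_t(x))⁻¹ ∘ Γ(h+tτ, x)‖_{L(Y)} ≤ p(‖F_t(x)‖)/p(‖x‖). Let B ∈ L(Y) satisfy ‖exp(−tB)‖_{L(Y)} ≤ 1 for all t ≥ 0, B∘C = C∘B, and B∘Γ(h,x) = Γ(h,x)∘B for all x ∈ 𝔻₁. Then for every point (z,w) in the image Φ[h](𝔻) of the extension Φ[h](x,y) := (h(x), Γ(h,x)y), the set Φ[h](𝔻) contains the curve {(z + tτ, exp(−t(B+C))w) : t ≥ 0}. In particular, if Γ(h+tτ, x) = Γ(h,x) for all t ≥ 0 and x ∈ 𝔻₁ (i.e.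 C = 0) and B = 0, then Φ[h] is convex in the direction (τ, 0). -/

import Mathlib

open Set Filter Topology

/-- Theorem 5.2 (convexity in one direction): let `h : 𝔻₁ → X` be injective and convex
in the direction `τ` (`‖τ‖ = 1`), `F_t = h⁻¹ ∘ (·+tτ) ∘ h`. If
`Γ(h+tτ, x) = exp(−tC) ∘ Γ(h,x)` with the norm bound
`‖Γ(h, F_t x)⁻¹ ∘ Γ(h+tτ, x)‖ ≤ p ‖F_t x‖ / p ‖x‖`, and `B ∈ L(Y)` satisfies
`‖exp(−tB)‖ ≤ 1`, commutes with `C` and with every `Γ(h,x)`, then for each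
`(z,w) ∈ Φ[h](𝔻)` the set `Φ[h](𝔻)` contains the curve `{(z+tτ, exp(−t(B+C))w) : t ≥ 0}`.
In particular, if `Γ(h+tτ,x) = Γ(h,x)` for all `t,x` and `B = 0`, then `Φ[h]` is convex
in the direction `(τ,0)`. -/
theorem stmt_15 {X Y : Type*} [NormedAddCommGroup X] [NormedSpace ℂ X] [CompleteSpace X]
    [NormedAddCommGroup Y] [NormedSpace ℂ Y] [CompleteSpace Y]
    (p : ℝ → ℝ)
    (hp_cont : ContinuousOn p (Icc 0 1))
    (hp_maps : ∀ s ∈ Icc (0:ℝ) 1, p s ∈ Icc (0:ℝ) 1)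
    (hp0 : p 0 = 1) (hp1 : p 1 = 0)
    (hp_anti : StrictAntiOn p (Icc 0 1))
    (D : Set (X × Y))
    (hD : D = {z : X × Y | ‖z.1‖ < 1 ∧ ‖z.2‖ < 1 ∧ ‖z.2‖ < p ‖z.1‖})
    (τ : X) (hτ : ‖τ‖ = 1)
    (h : X → X) (hinj : InjOn h {x : X | ‖x‖ < 1})
    (hconv : ∀ t : ℝ, 0 ≤ t → ∀ z ∈ h '' {x : X | ‖x‖ < 1},
      z + t • τ ∈ h '' {x : X | ‖x‖ < 1})
    (hinv : X → X) (hli : ∀ x : X, ‖x‖ < 1 → hinv (h x) = x)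
    (F : ℝ → X → X)
    (hF : ∀ (t : ℝ) (x : X), F t x = hinv (h x + t • τ))
    (C : Y →L[ℂ] Y)
    (Γh : X → (Y ≃L[ℂ] Y))              -- `Γ(h,·)`, invertible
    (Γsh : ℝ → X → Y →L[ℂ] Y)           -- `Γ(h+tτ,·)`
    (hΓ_exp : ∀ t : ℝ, 0 ≤ t → ∀ x : X, ‖x‖ < 1 →
      Γsh t x = (NormedSpace.exp ((-(t : ℂ)) • C)).comp (Γh x : Y →L[ℂ] Y))
    (hΓ_bound : ∀ t : ℝ, 0 ≤ t → ∀ x : X, ‖x‖ < 1 →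
      ‖((Γh (F t x)).symm : Y →L[ℂ] Y).comp (Γsh t x)‖ ≤ p ‖F t x‖ / p ‖x‖)
    (B : Y →L[ℂ] Y)
    (hB_contr : ∀ t : ℝ, 0 ≤ t → ‖NormedSpace.exp ((-(t : ℂ)) • B)‖ ≤ 1)
    (hBC : B.comp C = C.comp B)
    (hBΓ : ∀ x : X, ‖x‖ < 1 →
      B.comp (Γh x : Y →L[ℂ] Y) = (Γh x : Y →L[ℂ] Y).comp B)
    (Φh : X × Y → X × Y)
    (hΦh : ∀ z : X × Y, Φh z = (h z.1, Γh z.1 z.2)) :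
    (∀ ζ ∈ Φh '' D, ∀ t : ℝ, 0 ≤ t →
      ((ζ.1 + t • τ, (NormedSpace.exp ((-(t : ℂ)) • (B + C))) ζ.2) : X × Y)
        ∈ Φh '' D) ∧
    ((∀ t : ℝ, 0 ≤ t → ∀ x : X, ‖x‖ < 1 → Γsh t x = (Γh x : Y →L[ℂ] Y)) → B = 0 →
      ∀ ζ ∈ Φh '' D, ∀ t : ℝ, 0 ≤ t →
        ζ + t • ((τ, (0 : Y)) : X × Y) ∈ Φh '' D) := by

  have key : ∀ ζ ∈ Φh '' D, ∀ t : ℝ, 0 ≤ t →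
      ((ζ.1 + t • τ, (NormedSpace.exp ((-(t : ℂ)) • (B + C))) ζ.2) : X × Y) ∈ Φh '' D := by
    rintro ζ ⟨⟨x, y⟩, hzD, rfl⟩ t ht
    rw [hD] at hzD
    obtain ⟨hx1, hy1, hyp⟩ := hzD
    simp only at hx1 hy1 hyp
    obtain ⟨x', hx'1, hx'⟩ := hconv t ht (h x) ⟨x, hx1, rfl⟩
    simp only [Set.mem_setOf_eq] at hx'1
    have hFt : F t x = x' := by rw [hF, ← hx', hli x' hx'1]
    have hbound := hΓ_bound t ht x hx1
    rw [hFt] at hbound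
    have hexp := hΓ_exp t ht x hx1
    have hpx : 0 < p ‖x‖ := lt_of_le_of_lt (norm_nonneg y) hyp
    have hpx' : 0 < p ‖x'‖ := by
      have := hp_anti ⟨norm_nonneg x', hx'1.le⟩ ⟨zero_le_one, le_refl 1⟩ hx'1
      rwa [hp1] at this
    -- commuting facts
    have hBCc : Commute B C := hBC
    have hsplit : NormedSpace.exp ((-(t : ℂ)) • (B + C))
        = (NormedSpace.exp ((-(t : ℂ)) • B)).comp (NormedSpace.exp ((-(t : ℂ)) • C)) := by
      rw [smul_add]
      letI : NormedAlgebra ℚ (Y →L[ℂ] Y) := NormedAlgebra.restrictScalars ℚ ℂ _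
      exact NormedSpace.exp_add_of_commute ((hBCc.smul_left _).smul_right _)
    have hc0 : Commute B ((Γh x' : Y →L[ℂ] Y)) := hBΓ x' hx'1
    have hc1 : Commute ((-(t : ℂ)) • B) ((Γh x' : Y →L[ℂ] Y)) := hc0.smul_left _
    have hcommΓ : Commute (NormedSpace.exp ((-(t : ℂ)) • B)) ((Γh x' : Y →L[ℂ] Y)) :=
      hc1.exp_left
    set E := NormedSpace.exp ((-(t : ℂ)) • B) with hE
    have hEsymm : ∀ w : Y, E ((Γh x').symm w) = (Γh x').symm (E w) := by
      intro w
      apply (Γh x').injective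
      have h1 : (Γh x') (E ((Γh x').symm w)) = E ((Γh x') ((Γh x').symm w)) := by
        have h2 := congrArg (fun A : Y →L[ℂ] Y => A ((Γh x').symm w)) hcommΓ.eq
        simpa [ContinuousLinearMap.mul_apply] using h2.symm
      rw [h1, (Γh x').apply_symm_apply, (Γh x').apply_symm_apply]
    have hval : (Γh x').symm ((NormedSpace.exp ((-(t : ℂ)) • (B + C))) (Γh x y))
        = E ((((Γh x').symm : Y →L[ℂ] Y).comp (Γsh t x)) y) := by
      rw [hsplit]
      simp only [ContinuousLinearMap.comp_apply, ContinuousLinearMap.coe_comp',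
        Function.comp_apply, ContinuousLinearEquiv.coe_coe]
      rw [← hEsymm]
      congr 1
      rw [hexp]
      rfl
    have hn : ‖(Γh x').symm ((NormedSpace.exp ((-(t : ℂ)) • (B + C))) (Γh x y))‖
        < p ‖x'‖ := by
      rw [hval]
      calc ‖E ((((Γh x').symm : Y →L[ℂ] Y).comp (Γsh t x)) y)‖
          ≤ ‖E‖ * ‖(((Γh x').symm : Y →L[ℂ] Y).comp (Γsh t x)) y‖ :=
            E.le_opNorm _
        _ ≤ 1 * ‖(((Γh x').symm : Y →L[ℂ] Y).comp (Γsh t x)) y‖ :=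
            mul_le_mul_of_nonneg_right (hB_contr t ht) (norm_nonneg _)
        _ = ‖(((Γh x').symm : Y →L[ℂ] Y).comp (Γsh t x)) y‖ := one_mul _
        _ ≤ ‖(((Γh x').symm : Y →L[ℂ] Y).comp (Γsh t x))‖ * ‖y‖ :=
            ContinuousLinearMap.le_opNorm _ _
        _ ≤ (p ‖x'‖ / p ‖x‖) * ‖y‖ :=
            mul_le_mul_of_nonneg_right hbound (norm_nonneg _)
        _ < (p ‖x'‖ / p ‖x‖) * p ‖x‖ :=
            mul_lt_mul_of_pos_left hyp (div_pos hpx' hpx)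
        _ = p ‖x'‖ := div_mul_cancel₀ _ hpx.ne'
    refine ⟨(x', (Γh x').symm ((NormedSpace.exp ((-(t : ℂ)) • (B + C))) (Γh x y))), ?_, ?_⟩
    · rw [hD]
      exact ⟨hx'1, lt_of_lt_of_le hn (hp_maps ‖x'‖ ⟨norm_nonneg x', hx'1.le⟩).2, hn⟩
    · rw [hΦh, hΦh]
      simp only
      rw [(Γh x').apply_symm_apply, hx']
  refine ⟨key, ?_⟩
  intro hΓid hB0 ζ hζ t ht
  have h0 : ‖(0 : X)‖ < 1 := by simp
  have hC1 : NormedSpace.exp ((-(t : ℂ)) • C) = 1 := by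
    have he := hΓ_exp t ht 0 h0
    rw [hΓid t ht 0 h0] at he
    ext w
    have h2 := congrArg (fun A : Y →L[ℂ] Y => A ((Γh 0).symm w)) he
    simp only [ContinuousLinearMap.comp_apply, ContinuousLinearEquiv.coe_coe] at h2
    rw [(Γh 0).apply_symm_apply] at h2
    simpa using h2.symm
  have hBC1 : NormedSpace.exp ((-(t : ℂ)) • (B + C)) = 1 := by
    rw [hB0, zero_add, hC1]
  have hk := key ζ hζ t ht
  rw [hBC1] at hk
  convert hk using 2 <;> simp [Prod.ext_iff]
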